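/- Let V be a finite-dimensional vector space over a field and let U₁, …, U_k be subspaces of V, each of dimension n+1 (thought of as cones over projective tangent spaces T_{p_i}X of dimension n). The sum U₁ + ⋯ + U_k is a direct sum (equivalently, dim(U₁ + ⋯ + U_k) = k(n+1)) if and only if for every choice of 2-dimensional subspaces W_i ⊆ U_i (i = 1, …, k), the sum W₁ + ⋯ + W_k is a direct sum of dimension 2k — provided each U_i is spanned by its 2-dimensional subspaces through a fixed line ℓ_i ⊆ U_i (i.e., U_i = sup of all 2-dimensional subspaces of U_i containing ℓ_i). Prove the nontrivial direction: if dim(U₁ + ⋯ + U_k) < k(n+1), then there exist 2-dimensional subspaces W_i ⊆ U_i with ℓ_i ⊆ W_i such that dim(W₁ + ⋯ + W_k) < 2k. -/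
import Mathlib

open Module

private lemma finrank_biSup_le {K V : Type*} [Field K] [AddCommGroup V] [Module K V]
    [FiniteDimensional K V] {ι : Type*} (s : Finset ι) (W : ι → Submodule K V) :
    Module.finrank K ↥(⨆ i ∈ s, W i) ≤ ∑ i ∈ s, Module.finrank K (W i) := by
  classical
  induction s using Finset.cons_induction with
  | empty => simp
  | cons a s ha ih =>
      rw [Finset.sum_cons]
      have h1 : (⨆ i ∈ Finset.cons a s ha, W i) = W a ⊔ ⨆ i ∈ s, W i := by
        simp [iSup_or, iSup_sup_eq, iSup_iSup_eq_left]
      rw [h1]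
      calc Module.finrank K ↥(W a ⊔ ⨆ i ∈ s, W i)
          ≤ Module.finrank K (W a) + Module.finrank K ↥(⨆ i ∈ s, W i) := by
            have := Submodule.finrank_sup_add_finrank_inf_eq (W a) (⨆ i ∈ s, W i)
            omega
        _ ≤ _ := by exact Nat.add_le_add_left ih _

/-- Nontrivial direction of the linear-algebra core of Chandler's curvilinear
lemma: if the sum `U₁ + ⋯ + U_k` of the `(n+1)`-dimensional subspaces `U_i`
(each swept out by its `2`-dimensional subspaces through a fixed line `ℓ_i`)
is not direct, then some choice of `2`-dimensional subspaces `ℓ_i ⊆ W_i ⊆ U_i`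
has `dim (W₁ + ⋯ + W_k) < 2k`. -/
theorem stmt1 (K V : Type*) [Field K] [AddCommGroup V] [Module K V]
    [FiniteDimensional K V] (n k : ℕ) (hn : 1 ≤ n) (hk : 1 ≤ k)
    (U ℓ : Fin k → Submodule K V)
    (hU : ∀ i, Module.finrank K (U i) = n + 1)
    (hℓ : ∀ i, Module.finrank K (ℓ i) = 1) (hℓU : ∀ i, ℓ i ≤ U i)
    (hswept : ∀ i, ∀ v ∈ U i, v ≠ 0 →
      ∃ W : Submodule K V, ℓ i ≤ W ∧ W ≤ U i ∧ Module.finrank K W = 2 ∧ v ∈ W)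
    (hlt : Module.finrank K ↥(⨆ i, U i) < k * (n + 1)) :
    ∃ W : Fin k → Submodule K V,
      (∀ i, ℓ i ≤ W i ∧ W i ≤ U i ∧ Module.finrank K (W i) = 2) ∧
      Module.finrank K ↥(⨆ i, W i) < 2 * k := by
  classical
  -- the summation map
  set φ : (∀ i, U i) →ₗ[K] V :=
    LinearMap.lsum K (fun i => U i) K (fun i => (U i).subtype) with hφ
  have hφ_apply : ∀ u : ∀ i, U i, φ u = ∑ i, ((u i : V)) := by
    intro u; simp [hφ, LinearMap.lsum_apply]
  have hrange : LinearMap.range φ = ⨆ i, U i := by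
    apply le_antisymm
    · rintro x ⟨u, rfl⟩
      rw [hφ_apply]
      exact Submodule.sum_mem _ fun i _ =>
        Submodule.mem_iSup_of_mem i (u i).2
    · refine iSup_le fun i x hx => ?_
      refine ⟨Pi.single i ⟨x, hx⟩, ?_⟩
      rw [hφ_apply]
      rw [Finset.sum_eq_single i]
      · simp
      · intro j _ hj; simp [Pi.single_eq_of_ne hj]
      · simp
  have hdom : Module.finrank K (∀ i, U i) = k * (n + 1) := by
    rw [Module.finrank_pi_fintype]
    simp [hU, Finset.sum_const, mul_comm]
  -- kernel is nontrivial
  have hker : LinearMap.ker φ ≠ ⊥ := by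
    intro hbot
    have := LinearMap.finrank_range_add_finrank_ker φ
    rw [hbot, finrank_bot, hrange, hdom] at this
    omega
  obtain ⟨u, hu_ker, hu_ne⟩ := Submodule.exists_mem_ne_zero_of_ne_bot hker
  have hsum0 : ∑ i, ((u i : V)) = 0 := by
    rw [← hφ_apply]; exact hu_ker
  obtain ⟨j, hj⟩ : ∃ j, (u j : V) ≠ 0 := by
    by_contra h
    push_neg at h
    exact hu_ne (funext fun i => Subtype.ext (h i))
  -- nonzero elements of the lines
  have hℓne : ∀ i, ∃ e : V, e ∈ ℓ i ∧ e ≠ 0 := by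
    intro i
    apply Submodule.exists_mem_ne_zero_of_ne_bot
    intro hbot
    have := hℓ i; rw [hbot, finrank_bot] at this; omega
  choose e he_mem he_ne using hℓne
  -- choose the planes
  have hWex : ∀ i, ∃ W : Submodule K V,
      ℓ i ≤ W ∧ W ≤ U i ∧ Module.finrank K W = 2 ∧ (u i : V) ∈ W := by
    intro i
    by_cases h : (u i : V) = 0
    · obtain ⟨W, h1, h2, h3, _⟩ := hswept i (e i) (hℓU i (he_mem i)) (he_ne i)
      exact ⟨W, h1, h2, h3, h ▸ W.zero_mem⟩
    · obtain ⟨W, h1, h2, h3, h4⟩ := hswept i (u i : V) (u i).2 h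
      exact ⟨W, h1, h2, h3, h4⟩
  choose W hW1 hW2 hW3 hW4 using hWex
  refine ⟨W, fun i => ⟨hW1 i, hW2 i, hW3 i⟩, ?_⟩
  set S : Submodule K V := ⨆ i ∈ Finset.univ.erase j, W i with hS
  have hSle : Module.finrank K S ≤ 2 * (k - 1) := by
    calc Module.finrank K S ≤ ∑ i ∈ Finset.univ.erase j, Module.finrank K (W i) :=
          finrank_biSup_le _ _
      _ = 2 * (k - 1) := by
          rw [Finset.sum_congr rfl (fun i _ => hW3 i), Finset.sum_const]
          simp [Finset.card_erase_of_mem, mul_comm]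
  have huS : (u j : V) ∈ S := by
    have : (u j : V) = -∑ i ∈ Finset.univ.erase j, ((u i : V)) := by
      have h := Finset.add_sum_erase Finset.univ (fun i => ((u i : V))) (Finset.mem_univ j)
      rw [hsum0] at h
      exact eq_neg_of_add_eq_zero_left h
    rw [this]
    exact S.neg_mem (Submodule.sum_mem _ fun i hi =>
      Submodule.mem_iSup_of_mem i (by
        simp only [iSup_pos hi]
        exact hW4 i))
  have hinf : 1 ≤ Module.finrank K ↥(W j ⊓ S) := by
    have hne : (W j ⊓ S : Submodule K V) ≠ ⊥ := by
      intro hbot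
      have : (u j : V) ∈ (⊥ : Submodule K V) := hbot ▸ ⟨hW4 j, huS⟩
      exact hj (Submodule.mem_bot K |>.mp this)
    have := Module.finrank_pos_iff (R := K) (M := ↥(W j ⊓ S)) |>.mpr
      (Submodule.nontrivial_iff_ne_bot.mpr hne)
    omega
  have hle : (⨆ i, W i) ≤ W j ⊔ S := by
    refine iSup_le fun i => ?_
    by_cases h : i = j
    · subst h; exact le_sup_left
    · exact le_trans (le_iSup₂ (f := fun i _ => W i) i
        (Finset.mem_erase.mpr ⟨h, Finset.mem_univ i⟩)) le_sup_right
  have hsup := Submodule.finrank_sup_add_finrank_inf_eq (W j) S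
  have hmono := Submodule.finrank_mono hle
  have h2 : Module.finrank K (W j) = 2 := hW3 j
  omega
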